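/- Let δ_x > 0, let x₀ ∈ ℝ², and let X = x₀ + [−δ_x/2, δ_x/2]² be the closed square of side length δ_x centered at x₀. For every φ ∈ [0,π) and s ∈ ℝ, set t = x₀·θ_φ − s. If it is NOT the case that φ ∈ {0, π/2} and |t| = s̄(φ), then the one-dimensional Hausdorff measure of the intersection of X with the line L_{φ,s} equals δ_x² · w^rd(φ, t); that is, the ray-driven weight function is a closed form for the intersection length of a line with a square pixel. -/

import Mathlib

open MeasureTheory Real Set Filter

/-- The ray-driven weight function `w^rd(φ, t)` (for spatial resolution `δx`).
Here `κ(φ) = min{1/|cos φ|, 1/|sin φ|}` (with `1/0 = ∞`) is expressed as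
`1 / max |cos φ| |sin φ|`, which is the same real number. -/
noncomputable def rayWeight (δx φ t : ℝ) : ℝ :=
  (1 / δx) *
    (if δx / 2 * |(|Real.cos φ| - |Real.sin φ|)| ≤ |t| ∧
        |t| < δx / 2 * (|Real.cos φ| + |Real.sin φ|) then
      (δx / 2 * (|Real.cos φ| + |Real.sin φ|) - |t|) / (δx * |Real.cos φ * Real.sin φ|)
    else if |t| < δx / 2 * |(|Real.cos φ| - |Real.sin φ|)| then
      1 / max |Real.cos φ| |Real.sin φ|
    else if (φ = 0 ∨ φ = Real.pi / 2) ∧ |t| = δx / 2 * (|Real.cos φ| + |Real.sin φ|) then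
      1 / 2
    else 0)

/-- The pixel-driven weight function `w^pd(t)` (for detector resolution `δs`). -/
noncomputable def pixelWeight (δs t : ℝ) : ℝ := (1 / δs ^ 2) * max (δs - |t|) 0

lemma key2 (δx si c τ : ℝ) (hδx : 0 < δx) (hsi : 0 < si) (hc : 0 < c) :
    max 0 (min (min (δx/si) ((τ + δx/2*(c+si))/(si*c)))
      (min ((δx/2*(c+si) - τ)/(si*c)) (δx/c))) =
    δx^2 * ((1/δx) *
      (if δx/2 * |c - si| ≤ |τ| ∧ |τ| < δx/2*(c+si) then
         (δx/2*(c+si) - |τ|) / (δx*(c*si))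
       else if |τ| < δx/2*|c - si| then 1 / max c si
       else 0)) := by
  have hsc : 0 < si * c := mul_pos hsi hc
  have hm1 : δx/2*(c-si) ≤ δx/2*|c-si| :=
    mul_le_mul_of_nonneg_left (le_abs_self _) (by positivity)
  have hm2 : -(δx/2*|c-si|) ≤ δx/2*(c-si) := by
    have := mul_le_mul_of_nonneg_left (neg_abs_le (c-si)) (le_of_lt (half_pos hδx))
    linarith
  split_ifs with h1 h2
  · -- branch 1 : near-boundary linear part
    obtain ⟨ha, hb⟩ := h1
    have hval : δx^2 * ((1/δx) * ((δx/2*(c+si) - |τ|) / (δx*(c*si)))) =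
        (δx/2*(c+si) - |τ|)/(si*c) := by field_simp
    rw [hval]
    rcases abs_cases τ with ⟨he, hpos⟩ | ⟨he, hneg⟩
    · rw [he] at ha hb ⊢
      have k1 : (δx/2*(c+si) - τ)/(si*c) ≤ δx/si := by
        rw [div_le_div_iff₀ hsc hsi]; nlinarith
      have k2 : (δx/2*(c+si) - τ)/(si*c) ≤ δx/c := by
        rw [div_le_div_iff₀ hsc hc]; nlinarith
      have k3 : (δx/2*(c+si) - τ)/(si*c) ≤ (τ + δx/2*(c+si))/(si*c) := by
        gcongr; linarith
      rw [min_eq_left k2, min_eq_right (le_min k1 k3),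
        max_eq_right (div_nonneg (by linarith) hsc.le)]
    · rw [he] at ha hb ⊢
      have k1 : (τ + δx/2*(c+si))/(si*c) ≤ δx/si := by
        rw [div_le_div_iff₀ hsc hsi]; nlinarith
      have k2 : (τ + δx/2*(c+si))/(si*c) ≤ δx/c := by
        rw [div_le_div_iff₀ hsc hc]; nlinarith
      have k3 : (τ + δx/2*(c+si))/(si*c) ≤ (δx/2*(c+si) - τ)/(si*c) := by
        gcongr <;> linarith
      rw [min_eq_right k1, min_eq_left (le_min k3 k2),
        max_eq_right (div_nonneg (by linarith) hsc.le)]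
      ring_nf
  · -- branch 2 : interior, full chord
    have hτ1 : -(δx/2*|c-si|) < τ := by
      rcases abs_cases τ with ⟨he, _⟩ | ⟨he, _⟩ <;> rw [he] at h2 <;> linarith
    have hτ2 : τ < δx/2*|c-si| := by
      rcases abs_cases τ with ⟨he, _⟩ | ⟨he, _⟩ <;> rw [he] at h2 <;> linarith
    rcases le_total si c with hcmp | hcmp
    · have habs : |c - si| = c - si := abs_of_nonneg (by linarith)
      rw [habs] at hτ1 hτ2
      have hval : δx^2 * ((1/δx) * (1 / max c si)) = δx/c := by
        rw [max_eq_left hcmp]; field_simp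
      rw [hval]
      have k1 : δx/c ≤ δx/si := by rw [div_le_div_iff₀ hc hsi]; nlinarith
      have k2 : δx/c ≤ (τ + δx/2*(c+si))/(si*c) := by
        rw [div_le_div_iff₀ hc hsc]; nlinarith
      have k3 : δx/c ≤ (δx/2*(c+si) - τ)/(si*c) := by
        rw [div_le_div_iff₀ hc hsc]; nlinarith
      rw [min_eq_right k3, min_eq_right (le_min k1 k2),
        max_eq_right (by positivity)]
    · have habs : |c - si| = si - c := by rw [abs_sub_comm]; exact abs_of_nonneg (by linarith)
      rw [habs] at hτ1 hτ2
      have hval : δx^2 * ((1/δx) * (1 / max c si)) = δx/si := by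
        rw [max_eq_right hcmp]; field_simp
      rw [hval]
      have k1 : δx/si ≤ δx/c := by rw [div_le_div_iff₀ hsi hc]; nlinarith
      have k2 : δx/si ≤ (τ + δx/2*(c+si))/(si*c) := by
        rw [div_le_div_iff₀ hsi hsc]; nlinarith
      have k3 : δx/si ≤ (δx/2*(c+si) - τ)/(si*c) := by
        rw [div_le_div_iff₀ hsi hsc]; nlinarith
      rw [min_eq_left k2, min_eq_left (le_min k3 k1),
        max_eq_right (by positivity)]
  · -- branch 3 : empty intersection
    push_neg at h1 h2
    have hge : δx/2*(c+si) ≤ |τ| := h1 h2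
    rw [mul_zero, mul_zero]
    apply max_eq_left
    rcases abs_cases τ with ⟨he, hpos⟩ | ⟨he, hneg⟩
    · rw [he] at hge
      calc min (min (δx/si) ((τ + δx/2*(c+si))/(si*c)))
            (min ((δx/2*(c+si) - τ)/(si*c)) (δx/c))
          ≤ (δx/2*(c+si) - τ)/(si*c) := le_trans (min_le_right _ _) (min_le_left _ _)
        _ ≤ 0 := div_nonpos_of_nonpos_of_nonneg (by linarith) hsc.le
    · rw [he] at hge
      calc min (min (δx/si) ((τ + δx/2*(c+si))/(si*c)))
            (min ((δx/2*(c+si) - τ)/(si*c)) (δx/c))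
          ≤ (τ + δx/2*(c+si))/(si*c) := le_trans (min_le_left _ _) (min_le_right _ _)
        _ ≤ 0 := div_nonpos_of_nonpos_of_nonneg (by linarith) hsc.le

lemma ofReal_max0 (x : ℝ) : ENNReal.ofReal (max 0 x) = ENNReal.ofReal x := by
  rcases le_total 0 x with h | h
  · rw [max_eq_right h]
  · rw [max_eq_left h, ENNReal.ofReal_zero, eq_comm, ENNReal.ofReal_eq_zero]; exact h

lemma min_sub_max (a b p u : ℝ) :
    min a b - max p u = min (min (a-p) (a-u)) (min (b-p) (b-u)) := by
  rcases le_total a b with h|h <;> rcases le_total p u with h'|h' <;>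
    simp [min_def, max_def] <;> split_ifs <;> linarith

lemma setEq (A B si c h : ℝ) (hsi : 0 < si) (hc : 0 < c) :
    {r : ℝ | |A - r * si| ≤ h ∧ |B + r * c| ≤ h} =
      Icc (max ((A - h)/si) ((-B - h)/c)) (min ((A + h)/si) ((-B + h)/c)) := by
  ext r
  simp only [mem_setOf_eq, mem_Icc, abs_le, max_le_iff, le_min_iff,
    div_le_iff₀ hsi, le_div_iff₀ hsi, div_le_iff₀ hc, le_div_iff₀ hc]
  constructor
  · rintro ⟨⟨a1, a2⟩, b1, b2⟩; exact ⟨⟨by linarith, by linarith⟩, by linarith, by linarith⟩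
  · rintro ⟨⟨a1, a2⟩, b1, b2⟩; exact ⟨⟨by linarith, by linarith⟩, by linarith, by linarith⟩

lemma volume_strip (δx si c A B t : ℝ) (hδx : 0 < δx) (hsi : 0 < si) (hc : 0 < c)
    (ht : t = -(A * c + B * si)) :
    volume {r : ℝ | |A - r * si| ≤ δx/2 ∧ |B + r * c| ≤ δx/2} =
      ENNReal.ofReal (δx^2 * ((1/δx) *
        (if δx/2 * |c - si| ≤ |t| ∧ |t| < δx/2*(c+si) then
           (δx/2*(c+si) - |t|) / (δx*(c*si))
         else if |t| < δx/2*|c - si| then 1 / max c si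
         else 0))) := by
  have habs : |t| = |A * c + B * si| := by rw [ht, abs_neg]
  rw [habs, setEq A B si c (δx/2) hsi hc, Real.volume_Icc, min_sub_max]
  have hsc : si * c ≠ 0 := by positivity
  have d1 : (A + δx/2)/si - (A - δx/2)/si = δx/si := by field_simp; ring
  have d2 : (A + δx/2)/si - (-B - δx/2)/c = ((A*c+B*si) + δx/2*(c+si))/(si*c) := by
    field_simp; ring
  have d3 : (-B + δx/2)/c - (A - δx/2)/si = (δx/2*(c+si) - (A*c+B*si))/(si*c) := by
    field_simp; ring
  have d4 : (-B + δx/2)/c - (-B - δx/2)/c = δx/c := by field_simp; ring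
  rw [d1, d2, d3, d4, ← ofReal_max0, key2 δx si c (A*c+B*si) hδx hsi hc]

/-- For `δ_x > 0`, a closed square `X` of side length `δ_x` centered at
`x₀ ∈ ℝ²`, an angle `φ ∈ [0, π)` and `s ∈ ℝ`, with `t = x₀ · θ_φ - s`: provided it is not
the case that `φ ∈ {0, π/2}` and `|t| = s̄(φ)`, the 1-dimensional Hausdorff measure of the
intersection of `X` with the line `L_{φ,s}` equals `δ_x² · w^rd(φ, t)`. -/
theorem stmt0 (δx : ℝ) (hδx : 0 < δx) (x₀ : EuclideanSpace ℝ (Fin 2))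
    (X : Set (EuclideanSpace ℝ (Fin 2)))
    (hX : X = {y | |y 0 - x₀ 0| ≤ δx / 2 ∧ |y 1 - x₀ 1| ≤ δx / 2})
    (φ s : ℝ) (hφ : φ ∈ Set.Ico 0 Real.pi)
    (t : ℝ) (ht : t = (x₀ 0 * Real.cos φ + x₀ 1 * Real.sin φ) - s)
    (hne : ¬((φ = 0 ∨ φ = Real.pi / 2) ∧
      |t| = δx / 2 * (|Real.cos φ| + |Real.sin φ|)))
    (L : Set (EuclideanSpace ℝ (Fin 2)))
    (hL : L = {y | ∃ r : ℝ, y 0 = s * Real.cos φ - r * Real.sin φ ∧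
      y 1 = s * Real.sin φ + r * Real.cos φ}) :
    μH[1] (X ∩ L) = ENNReal.ofReal (δx ^ 2 * rayWeight δx φ t) := by
  obtain ⟨hφ0, hφπ⟩ := hφ
  set f : ℝ → EuclideanSpace ℝ (Fin 2) := fun r =>
    (WithLp.toLp 2
      ![s * Real.cos φ - r * Real.sin φ, s * Real.sin φ + r * Real.cos φ]) with hf_def
  have hf : Isometry f := by
    apply Isometry.of_dist_eq
    intro a b
    rw [EuclideanSpace.dist_eq, Real.dist_eq, Fin.sum_univ_two]
    simp only [hf_def, WithLp.ofLp_toLp, Matrix.cons_val_zero, Matrix.cons_val_one, Matrix.head_cons, Real.dist_eq]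
    rw [← Real.sqrt_sq_eq_abs (a - b)]
    congr 1
    rw [sq_abs, sq_abs]
    nlinarith [Real.sin_sq_add_cos_sq φ]
  have hf0 : ∀ r, f r 0 = s * Real.cos φ - r * Real.sin φ := fun r => rfl
  have hf1 : ∀ r, f r 1 = s * Real.sin φ + r * Real.cos φ := fun r => rfl
  have hrange : L = Set.range f := by
    rw [hL]; ext y
    simp only [Set.mem_setOf_eq, Set.mem_range]
    constructor
    · rintro ⟨r, h0, h1⟩
      refine ⟨r, ?_⟩
      ext i
      fin_cases i
      · exact h0.symm
      · exact h1.symm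
    · rintro ⟨r, rfl⟩
      exact ⟨r, rfl, rfl⟩
  have hXL : X ∩ L = f '' (f ⁻¹' X) := by
    rw [hrange, Set.image_preimage_eq_inter_range]
  rw [hXL, hf.hausdorffMeasure_image (Or.inl one_pos.le), hausdorffMeasure_real]
  have hpre : f ⁻¹' X = {r : ℝ | |(s * Real.cos φ - x₀ 0) - r * Real.sin φ| ≤ δx/2 ∧
      |(s * Real.sin φ - x₀ 1) + r * Real.cos φ| ≤ δx/2} := by
    ext r
    simp only [Set.mem_preimage, hX, Set.mem_setOf_eq, hf0, hf1]
    constructor <;> rintro ⟨u, v⟩ <;>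
      exact ⟨by convert u using 2; ring, by convert v using 2; ring⟩
  rw [hpre]
  set A := s * Real.cos φ - x₀ 0 with hA
  set B := s * Real.sin φ - x₀ 1 with hB
  have hpy := Real.sin_sq_add_cos_sq φ
  have ht' : t = -(A * Real.cos φ + B * Real.sin φ) := by
    rw [ht, hA, hB]; ring_nf; linear_combination s * hpy
  by_cases hφzero : φ = 0
  · -- axis case φ = 0
    subst hφzero
    rw [Real.cos_zero, Real.sin_zero] at ht' ⊢
    have htA : |t| = |A| := by rw [ht']; simp
    have hneA : |A| ≠ δx / 2 := by
      intro h
      exact hne ⟨Or.inl rfl, by rw [htA, h]; norm_num⟩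
    have hW : rayWeight δx 0 t = (1/δx) * (if |A| < δx/2 then 1 else 0) := by
      rw [rayWeight]
      simp only [Real.cos_zero, Real.sin_zero, abs_one, abs_zero, sub_zero, add_zero, htA]
      norm_num
      split_ifs with h1 h2 h3 <;>
        first | rfl | linarith [h1.1, h1.2] | exact absurd h3 hneA
    rw [hW]
    by_cases hlt : |A| < δx/2
    · have hset : {r : ℝ | |A - r * 0| ≤ δx/2 ∧ |B + r * 1| ≤ δx/2}
          = Icc (-B - δx/2) (-B + δx/2) := by
        ext r
        simp only [mem_setOf_eq, mem_Icc, mul_zero, sub_zero, mul_one, abs_le]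
        constructor
        · rintro ⟨_, h1, h2⟩; exact ⟨by linarith, by linarith⟩
        · rintro ⟨h1, h2⟩; exact ⟨abs_le.mp hlt.le, by linarith, by linarith⟩
      rw [hset, Real.volume_Icc, if_pos hlt]
      congr 1
      field_simp
      ring
    · have hset : {r : ℝ | |A - r * 0| ≤ δx/2 ∧ |B + r * 1| ≤ δx/2} = (∅ : Set ℝ) := by
        ext r
        simp only [mem_setOf_eq, mul_zero, sub_zero, mem_empty_iff_false, iff_false, not_and]
        intro h
        exact absurd (lt_of_le_of_ne h hneA) hlt
      rw [hset, if_neg hlt]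
      simp
  · have hφpos : 0 < φ := lt_of_le_of_ne hφ0 (Ne.symm hφzero)
    have hsin : 0 < Real.sin φ := Real.sin_pos_of_pos_of_lt_pi hφpos hφπ
    by_cases hcos0 : Real.cos φ = 0
    · -- axis case φ = π/2
      have hφhalf : φ = Real.pi/2 := by
        obtain ⟨n, hn⟩ := Real.cos_eq_zero_iff.mp hcos0
        have hπ := Real.pi_pos
        have hcast : ((2*n+1 : ℤ) : ℝ) = 2*(n:ℝ)+1 := by push_cast; ring
        have hn0 : (0:ℝ) ≤ 2*(n:ℝ)+1 := by nlinarith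
        have hn2 : 2*(n:ℝ)+1 < 2 := by nlinarith
        have hn0' : (0:ℤ) ≤ 2*n+1 := by exact_mod_cast hcast ▸ hn0
        have hn2' : (2*n+1 : ℤ) < 2 := by exact_mod_cast hcast ▸ hn2
        have : n = 0 := by omega
        rw [this] at hn
        push_cast at hn
        linarith [hn]
      subst hφhalf
      rw [Real.cos_pi_div_two, Real.sin_pi_div_two] at ht' ⊢
      have htB : |t| = |B| := by rw [ht']; simp
      have hneB : |B| ≠ δx / 2 := by
        intro h
        exact hne ⟨Or.inr rfl, by rw [htB, h]; norm_num⟩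
      have hW : rayWeight δx (Real.pi/2) t = (1/δx) * (if |B| < δx/2 then 1 else 0) := by
        rw [rayWeight]
        simp only [Real.cos_pi_div_two, Real.sin_pi_div_two, abs_one, abs_zero, htB]
        norm_num
        split_ifs with h1 h2 h3 <;>
          first | rfl | linarith [h1.1, h1.2] | exact absurd h3 hneB
      rw [hW]
      by_cases hlt : |B| < δx/2
      · have hset : {r : ℝ | |A - r * 1| ≤ δx/2 ∧ |B + r * 0| ≤ δx/2}
            = Icc (A - δx/2) (A + δx/2) := by
          ext r
          simp only [mem_setOf_eq, mem_Icc, mul_zero, add_zero, mul_one, abs_le]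
          constructor
          · rintro ⟨⟨h1, h2⟩, _⟩; exact ⟨by linarith, by linarith⟩
          · rintro ⟨h1, h2⟩; exact ⟨⟨by linarith, by linarith⟩, abs_le.mp hlt.le⟩
        rw [hset, Real.volume_Icc, if_pos hlt]
        congr 1
        field_simp
        ring
      · have hset : {r : ℝ | |A - r * 1| ≤ δx/2 ∧ |B + r * 0| ≤ δx/2} = (∅ : Set ℝ) := by
          ext r
          simp only [mem_setOf_eq, mul_zero, add_zero, mem_empty_iff_false, iff_false, not_and]
          intro _ h
          exact absurd (lt_of_le_of_ne h hneB) hlt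
        rw [hset, if_neg hlt]
        simp
    · -- generic case
      have hφhalf : φ ≠ Real.pi/2 := fun h => hcos0 (h ▸ Real.cos_pi_div_two)
      rcases lt_or_gt_of_ne hcos0 with hcneg | hcpos
      · -- cos φ < 0
        have habssub : ∀ r : ℝ, |B + r * Real.cos φ| = |(-B) + r * (-Real.cos φ)| := by
          intro r; rw [← abs_neg]; ring_nf
        have hsetrw : {r : ℝ | |A - r * Real.sin φ| ≤ δx/2 ∧ |B + r * Real.cos φ| ≤ δx/2}
            = {r : ℝ | |A - r * Real.sin φ| ≤ δx/2 ∧ |(-B) + r * (-Real.cos φ)| ≤ δx/2} := by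
          ext r; simp only [Set.mem_setOf_eq, habssub r]
        have htneg : -t = -(A * (-Real.cos φ) + (-B) * Real.sin φ) := by
          rw [ht']; ring
        rw [hsetrw, volume_strip δx (Real.sin φ) (-Real.cos φ) A (-B) (-t) hδx hsin
          (by linarith) htneg]
        congr 1
        rw [rayWeight, abs_of_pos hsin, abs_of_neg hcneg, abs_neg,
          abs_mul, abs_of_neg hcneg, abs_of_pos hsin]
        simp only [hφzero, hφhalf, false_or, false_and, if_false]
      · -- cos φ > 0
        rw [volume_strip δx (Real.sin φ) (Real.cos φ) A B t hδx hsin hcpos ht']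
        congr 1
        rw [rayWeight, abs_of_pos hsin, abs_of_pos hcpos,
          abs_mul, abs_of_pos hcpos, abs_of_pos hsin]
        simp only [hφzero, hφhalf, false_or, false_and, if_false]
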